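/- The correction vector ηᵢ satisfies ‖ηᵢ‖ ≤ (1/(√n · τ)) · (‖Xᵢ‖/√n) · min(|ψ(r̃_{i,(i)})|, |r̃_{i,(i)}|/cᵢ). Moreover, for any real numbers γ*_j (j ≠ i), the vector 𝓡ᵢ = (1/n) Σ_{j≠i} [ψ'(γ*_j) − ψ'(r̃_{j,(i)})] Xⱼ Xⱼᵀ ηᵢ satisfies ‖𝓡ᵢ‖ ≤ ‖Σ̂‖_op · sup_{j≠i} |ψ'(γ*_j) − ψ'(r̃_{j,(i)})| · (1/(√n · τ)) · (‖Xᵢ‖/√n) · min(|ψ(r̃_{i,(i)})|, |r̃_{i,(i)}|/cᵢ), where ‖Σ̂‖_op is the operator norm of Σ̂ = (1/n) Σᵢ Xᵢ Xᵢᵀ. -/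

import Mathlib

noncomputable section

open scoped BigOperators

/-- View a plain vector as an element of Euclidean space. -/
def toE {p : ℕ} (v : Fin p → ℝ) : EuclideanSpace ℝ (Fin p) := WithLp.toLp 2 v

/-- Residual `ε j - Xⱼᵀβ`. -/
def resid {p n : ℕ} (X : Fin n → EuclideanSpace ℝ (Fin p)) (ε : Fin n → ℝ)
    (β : EuclideanSpace ℝ (Fin p)) (j : Fin n) : ℝ :=
  ε j - ∑ k, X j k * β k

/-- The leave-one-out gradient map `fᵢ(β) = -(1/n) Σ_{j≠i} Xⱼ ψ(εⱼ - Xⱼᵀβ) + τβ`. -/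
def fgradLOO {p n : ℕ} (ρ : ℝ → ℝ) (τ : ℝ) (X : Fin n → EuclideanSpace ℝ (Fin p))
    (ε : Fin n → ℝ) (i : Fin n) (β : EuclideanSpace ℝ (Fin p)) :
    EuclideanSpace ℝ (Fin p) :=
  τ • β - (1 / (n : ℝ)) • ∑ j ∈ Finset.univ.erase i, deriv ρ (resid X ε β j) • X j

/-- `Sᵢ = (1/n) Σ_{j≠i} ψ'(r̃_{j,(i)}) Xⱼ Xⱼᵀ`. -/
def Smat {p n : ℕ} (ρ : ℝ → ℝ) (X : Fin n → EuclideanSpace ℝ (Fin p)) (ε : Fin n → ℝ)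
    (i : Fin n) (βi : EuclideanSpace ℝ (Fin p)) : Matrix (Fin p) (Fin p) ℝ :=
  (1 / (n : ℝ)) • ∑ j ∈ Finset.univ.erase i,
    deriv (deriv ρ) (resid X ε βi j) • Matrix.vecMulVec (fun k => X j k) (fun k => X j k)

/-- `cᵢ = (1/n) Xᵢᵀ (Sᵢ + τ Id)⁻¹ Xᵢ`. -/
def cval {p n : ℕ} (ρ : ℝ → ℝ) (τ : ℝ) (X : Fin n → EuclideanSpace ℝ (Fin p))
    (ε : Fin n → ℝ) (i : Fin n) (βi : EuclideanSpace ℝ (Fin p)) : ℝ :=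
  (1 / (n : ℝ)) * ∑ k, X i k *
    ((Smat ρ X ε i βi + τ • (1 : Matrix (Fin p) (Fin p) ℝ))⁻¹.mulVec (fun l => X i l)) k

/-- `ηᵢ = (1/n)(Sᵢ + τ Id)⁻¹ Xᵢ ψ(pr)`, where `pr = prox_{cᵢ}(ρ)(r̃_{i,(i)})`. -/
def etaVec {p n : ℕ} (ρ : ℝ → ℝ) (τ : ℝ) (X : Fin n → EuclideanSpace ℝ (Fin p))
    (ε : Fin n → ℝ) (i : Fin n) (βi : EuclideanSpace ℝ (Fin p)) (pr : ℝ) :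
    EuclideanSpace ℝ (Fin p) :=
  ((1 / (n : ℝ)) * deriv ρ pr) •
    toE ((Smat ρ X ε i βi + τ • (1 : Matrix (Fin p) (Fin p) ℝ))⁻¹.mulVec (fun l => X i l))

/-- The sample covariance matrix `Σ̂ = (1/n) Σᵢ Xᵢ Xᵢᵀ`. -/
def sigmaHat {p n : ℕ} (X : Fin n → EuclideanSpace ℝ (Fin p)) :
    Matrix (Fin p) (Fin p) ℝ :=
  (1 / (n : ℝ)) • ∑ i, Matrix.vecMulVec (fun k => X i k) (fun k => X i k)


private lemma deriv_nonneg_of_monotone {f : ℝ → ℝ} (hm : Monotone f) {x : ℝ}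
    (hd : DifferentiableAt ℝ f x) : 0 ≤ deriv f x := by
  have h := hasDerivAt_iff_tendsto_slope.mp hd.hasDerivAt
  refine ge_of_tendsto h ?_
  filter_upwards [self_mem_nhdsWithin] with y hy
  have hy' : y ≠ x := hy
  rw [slope_def_field]
  rcases hy'.lt_or_gt with h' | h'
  · exact div_nonneg_iff.mpr (Or.inr ⟨by simpa using hm h'.le, by linarith⟩)
  · exact div_nonneg (by simpa using hm h'.le) (by linarith)

private lemma sum_mulVec' {p : ℕ} {ι : Type*} (s : Finset ι) (A : ι → Matrix (Fin p) (Fin p) ℝ)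
    (v : Fin p → ℝ) : (∑ j ∈ s, A j).mulVec v = ∑ j ∈ s, (A j).mulVec v := by
  ext k
  simp only [Matrix.mulVec, dotProduct, Matrix.sum_apply, Finset.sum_apply, Finset.sum_mul]
  exact Finset.sum_comm

private lemma qform_eq {p : ℕ} {ι : Type*} (s : Finset ι) (c : ℝ) (d : ι → ℝ)
    (w : ι → Fin p → ℝ) (v : Fin p → ℝ) :
    dotProduct v ((c • ∑ j ∈ s, d j • Matrix.vecMulVec (w j) (w j)).mulVec v)
      = c * ∑ j ∈ s, d j * (dotProduct (w j) v)^2 := by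
  rw [Matrix.smul_mulVec, dotProduct_smul, sum_mulVec', smul_eq_mul]
  congr 1
  simp only [dotProduct, Matrix.mulVec, Finset.sum_apply, Matrix.smul_mulVec,
    Matrix.vecMulVec_apply, Pi.smul_apply, smul_eq_mul, Finset.mul_sum, Finset.sum_mul]
  rw [Finset.sum_comm]
  refine Finset.sum_congr rfl fun j _ => ?_
  rw [pow_two, Finset.sum_mul_sum, Finset.mul_sum]
  refine Finset.sum_congr rfl fun x _ => ?_
  rw [Finset.mul_sum]
  refine Finset.sum_congr rfl fun y _ => ?_
  ring

private lemma dot_inner {p : ℕ} (y z : Fin p → ℝ) :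
    dotProduct y z = inner ℝ (toE y) (toE z) := by
  simp [PiLp.inner_apply, RCLike.inner_apply, dotProduct, toE]
  exact Finset.sum_congr rfl fun _ _ => mul_comm _ _

private lemma clm_app {p : ℕ} (A : Matrix (Fin p) (Fin p) ℝ) (y : Fin p → ℝ) :
    (Matrix.toEuclideanCLM (𝕜 := ℝ) A) (toE y) = toE (A.mulVec y) := by
  have h1 : toE y = (WithLp.equiv 2 (Fin p → ℝ)).symm y := rfl
  rw [h1]
  rfl

private lemma inner_dot {p : ℕ} (x w : EuclideanSpace ℝ (Fin p)) :
    (inner ℝ x w : ℝ) = dotProduct (fun k => x k) (fun k => w k) :=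
  (dot_inner (fun k => x k) (fun k => w k)).symm

private lemma partB {p n : ℕ} (X : Fin n → EuclideanSpace ℝ (Fin p)) (i : Fin n)
    (η : EuclideanSpace ℝ (Fin p)) (a : Fin n → ℝ) (B : ℝ)
    (hη : ‖η‖ ≤ B) (hB : 0 ≤ B) :
    ‖(1 / (n : ℝ)) • ∑ j ∈ Finset.univ.erase i, (a j * (∑ k, X j k * η k)) • X j‖ ≤
      ‖Matrix.toEuclideanCLM (𝕜 := ℝ) (sigmaHat X)‖ *
        (⨆ j : {j : Fin n // j ≠ i}, |a ↑j|) * B := by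
  classical
  set v : EuclideanSpace ℝ (Fin p) :=
    (1 / (n : ℝ)) • ∑ j ∈ Finset.univ.erase i, (a j * (∑ k, X j k * η k)) • X j with hv_def
  set K := ‖Matrix.toEuclideanCLM (𝕜 := ℝ) (sigmaHat X)‖ with hK_def
  have hK0 : 0 ≤ K := norm_nonneg _
  set s := ⨆ j : {j : Fin n // j ≠ i}, |a ↑j| with hs_def
  have hbdd : BddAbove (Set.range fun j : {j : Fin n // j ≠ i} => |a ↑j|) :=
    Set.Finite.bddAbove (Set.finite_range _)
  have hs_j : ∀ j ∈ Finset.univ.erase i, |a j| ≤ s := fun j hj =>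
    le_ciSup hbdd (⟨j, (Finset.mem_erase.mp hj).1⟩ : {j : Fin n // j ≠ i})
  have hs0 : 0 ≤ s := by
    rcases isEmpty_or_nonempty {j : Fin n // j ≠ i} with hemp | hne
    · rw [hs_def, Real.iSup_of_isEmpty]
    · exact le_trans (abs_nonneg _) (le_ciSup hbdd hne.some)
  have hip : ∀ (x w : EuclideanSpace ℝ (Fin p)), (inner ℝ x w : ℝ) = ∑ k, x k * w k := by
    intro x w; simp [PiLp.inner_apply, RCLike.inner_apply]
    exact Finset.sum_congr rfl fun _ _ => mul_comm _ _
  -- quadratic form bound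
  have hQ : ∀ w : EuclideanSpace ℝ (Fin p),
      (1 / (n : ℝ)) * ∑ j ∈ Finset.univ.erase i, (inner ℝ (X j) w : ℝ)^2 ≤ K * ‖w‖^2 := by
    intro w
    simp only [inner_dot]
    have h1 : ∑ j ∈ Finset.univ.erase i,
          (dotProduct (fun k => X j k) (fun k => w k))^2
        ≤ ∑ j : Fin n, (dotProduct (fun k => X j k) (fun k => w k))^2 :=
      Finset.sum_le_sum_of_subset_of_nonneg (Finset.erase_subset _ _)
        (fun j _ _ => sq_nonneg _)
    have h2 : (1 / (n : ℝ)) * ∑ j : Fin n,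
          (dotProduct (fun k => X j k) (fun k => w k))^2
        = dotProduct (fun k => w k) ((sigmaHat X).mulVec (fun k => w k)) := by
      have hσ : sigmaHat X = (1 / (n : ℝ)) •
          ∑ j, (1 : ℝ) • Matrix.vecMulVec (fun k => X j k) (fun k => X j k) := by
        simp [sigmaHat]
      rw [hσ, qform_eq]
      simp
    have h3 : dotProduct (fun k => w k) ((sigmaHat X).mulVec (fun k => w k))
        ≤ K * ‖w‖^2 := by
      rw [dot_inner]
      have hle : (inner ℝ (toE fun k => w k) (toE ((sigmaHat X).mulVec fun k => w k)) : ℝ)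
          ≤ ‖toE fun k => w k‖ * ‖toE ((sigmaHat X).mulVec fun k => w k)‖ :=
        real_inner_le_norm _ _
      have hop : ‖toE ((sigmaHat X).mulVec fun k => w k)‖ ≤ K * ‖w‖ := by
        have h := (Matrix.toEuclideanCLM (𝕜 := ℝ) (sigmaHat X)).le_opNorm
          (toE fun k => w k)
        rw [clm_app] at h
        exact le_trans h (le_of_eq rfl)
      have hwn : ‖toE fun k => w k‖ = ‖w‖ := rfl
      calc (inner ℝ (toE fun k => w k) (toE ((sigmaHat X).mulVec fun k => w k)) : ℝ)
          ≤ ‖toE fun k => w k‖ * ‖toE ((sigmaHat X).mulVec fun k => w k)‖ := hle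
        _ ≤ ‖w‖ * (K * ‖w‖) := by rw [hwn]; exact mul_le_mul_of_nonneg_left hop (norm_nonneg _)
        _ = K * ‖w‖^2 := by ring
    calc (1 / (n : ℝ)) * ∑ j ∈ Finset.univ.erase i,
          (dotProduct (fun k => X j k) (fun k => w k))^2
        ≤ (1 / (n : ℝ)) * ∑ j : Fin n,
          (dotProduct (fun k => X j k) (fun k => w k))^2 := by
          apply mul_le_mul_of_nonneg_left h1; positivity
      _ = _ := h2
      _ ≤ K * ‖w‖^2 := h3
  -- inner ℝ products with v
  have hinner_v : ∀ w : EuclideanSpace ℝ (Fin p), (inner ℝ v w : ℝ)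
      = (1 / (n : ℝ)) * ∑ j ∈ Finset.univ.erase i,
          (a j * (inner ℝ (X j) η : ℝ)) * (inner ℝ (X j) w : ℝ) := by
    intro w
    rw [hv_def, real_inner_smul_left, sum_inner]
    congr 1
    refine Finset.sum_congr rfl fun j hj => ?_
    rw [real_inner_smul_left, ← hip]
  have hvv : ‖v‖^2 = (1 / (n : ℝ)) * ∑ j ∈ Finset.univ.erase i,
      (a j * (inner ℝ (X j) η : ℝ)) * (inner ℝ (X j) v : ℝ) := by
    rw [← real_inner_self_eq_norm_sq]; exact hinner_v v
  set T := (1 / (n : ℝ)) * ∑ j ∈ Finset.univ.erase i,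
      |(inner ℝ (X j) η : ℝ)| * |(inner ℝ (X j) v : ℝ)| with hT_def
  have h1 : ‖v‖^2 ≤ s * T := by
    rw [hvv, hT_def]
    have hstep : ∀ j ∈ Finset.univ.erase i,
        (a j * (inner ℝ (X j) η : ℝ)) * (inner ℝ (X j) v : ℝ)
          ≤ s * (|(inner ℝ (X j) η : ℝ)| * |(inner ℝ (X j) v : ℝ)|) := by
      intro j hj
      have hterm : (a j * (inner ℝ (X j) η : ℝ)) * (inner ℝ (X j) v : ℝ)
          ≤ |a j| * (|(inner ℝ (X j) η : ℝ)| * |(inner ℝ (X j) v : ℝ)|) := by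
        calc (a j * (inner ℝ (X j) η : ℝ)) * (inner ℝ (X j) v : ℝ)
            ≤ |(a j * (inner ℝ (X j) η : ℝ)) * (inner ℝ (X j) v : ℝ)| := le_abs_self _
          _ = |a j| * (|(inner ℝ (X j) η : ℝ)| * |(inner ℝ (X j) v : ℝ)|) := by
              rw [abs_mul, abs_mul]; ring
      exact hterm.trans (mul_le_mul_of_nonneg_right (hs_j j hj)
        (mul_nonneg (abs_nonneg _) (abs_nonneg _)))
    calc (1 / (n : ℝ)) * ∑ j ∈ Finset.univ.erase i,
          (a j * (inner ℝ (X j) η : ℝ)) * (inner ℝ (X j) v : ℝ)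
        ≤ (1 / (n : ℝ)) * ∑ j ∈ Finset.univ.erase i,
          s * (|(inner ℝ (X j) η : ℝ)| * |(inner ℝ (X j) v : ℝ)|) := by
          apply mul_le_mul_of_nonneg_left (Finset.sum_le_sum hstep); positivity
      _ = s * ((1 / (n : ℝ)) * ∑ j ∈ Finset.univ.erase i,
          |(inner ℝ (X j) η : ℝ)| * |(inner ℝ (X j) v : ℝ)|) := by
          rw [← Finset.mul_sum]; ring
  have h3 : (1 / (n : ℝ)) * ∑ j ∈ Finset.univ.erase i, (inner ℝ (X j) η : ℝ) ^ 2
      ≤ K * ‖η‖^2 := hQ η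
  have h4 : (1 / (n : ℝ)) * ∑ j ∈ Finset.univ.erase i, (inner ℝ (X j) v : ℝ) ^ 2
      ≤ K * ‖v‖^2 := hQ v
  have h2 : T^2 ≤ ((1 / (n : ℝ)) * ∑ j ∈ Finset.univ.erase i, (inner ℝ (X j) η : ℝ) ^ 2)
      * ((1 / (n : ℝ)) * ∑ j ∈ Finset.univ.erase i, (inner ℝ (X j) v : ℝ) ^ 2) := by
    have hcs := Finset.sum_mul_sq_le_sq_mul_sq (Finset.univ.erase i)
      (fun j => |(inner ℝ (X j) η : ℝ)|) (fun j => |(inner ℝ (X j) v : ℝ)|)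
    simp only [sq_abs] at hcs
    have hn2 : (0:ℝ) ≤ (1 / (n : ℝ))^2 := by positivity
    calc T^2 = (1 / (n : ℝ))^2 * (∑ j ∈ Finset.univ.erase i,
          |(inner ℝ (X j) η : ℝ)| * |(inner ℝ (X j) v : ℝ)|)^2 := by
          rw [hT_def]; ring
      _ ≤ (1 / (n : ℝ))^2 * ((∑ j ∈ Finset.univ.erase i, (inner ℝ (X j) η : ℝ) ^ 2)
            * (∑ j ∈ Finset.univ.erase i, (inner ℝ (X j) v : ℝ) ^ 2)) :=
          mul_le_mul_of_nonneg_left hcs hn2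
      _ = _ := by ring
  have hT0 : 0 ≤ T := by
    rw [hT_def]
    have h0 : (0:ℝ) ≤ ∑ j ∈ Finset.univ.erase i,
        |(inner ℝ (X j) η : ℝ)| * |(inner ℝ (X j) v : ℝ)| :=
      Finset.sum_nonneg fun j _ => mul_nonneg (abs_nonneg _) (abs_nonneg _)
    positivity
  have h5 : T ≤ K * ‖η‖ * ‖v‖ := by
    have hsum_g : (0:ℝ) ≤ (1 / (n : ℝ)) * ∑ j ∈ Finset.univ.erase i,
        (inner ℝ (X j) v : ℝ) ^ 2 := by
      have h0 : (0:ℝ) ≤ ∑ j ∈ Finset.univ.erase i, (inner ℝ (X j) v : ℝ) ^ 2 :=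
        Finset.sum_nonneg fun j _ => sq_nonneg _
      positivity
    have h25 : T^2 ≤ (K * ‖η‖ * ‖v‖)^2 := by
      calc T^2 ≤ _ := h2
        _ ≤ (K * ‖η‖^2) * (K * ‖v‖^2) :=
          mul_le_mul h3 h4 hsum_g (by positivity)
        _ = (K * ‖η‖ * ‖v‖)^2 := by ring
    nlinarith [hT0, h25, mul_nonneg (mul_nonneg hK0 (norm_nonneg η)) (norm_nonneg v)]
  have h6 : ‖v‖^2 ≤ s * (K * ‖η‖ * ‖v‖) := h1.trans (mul_le_mul_of_nonneg_left h5 hs0)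
  rcases (norm_nonneg v).eq_or_lt with hv0 | hv0
  · rw [← hv0]
    exact mul_nonneg (mul_nonneg hK0 hs0) hB
  · have h7 : s * (K * ‖η‖ * ‖v‖) ≤ s * (K * B * ‖v‖) := by
      gcongr
    nlinarith [h6, h7, hv0]

theorem statement5 {p n : ℕ} (ρ : ℝ → ℝ) (τ : ℝ) (hτ : 0 < τ)
    (hρconv : ConvexOn ℝ Set.univ ρ) (hρsmooth : ContDiff ℝ 2 ρ)
    (hρnonneg : ∀ x, 0 ≤ ρ x) (hρzero : ρ 0 = 0)
    (hsgn : ∀ x : ℝ, x ≠ 0 → Real.sign (deriv ρ x) = Real.sign x)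
    (X : Fin n → EuclideanSpace ℝ (Fin p)) (ε : Fin n → ℝ) (i : Fin n)
    (βi : EuclideanSpace ℝ (Fin p))
    (hβi : fgradLOO ρ τ X ε i βi = 0)
    (hc : 0 < cval ρ τ X ε i βi)
    -- `pr` is the prox value: the unique `y` with `y + cᵢ ψ(y) = r̃_{i,(i)}`
    (pr : ℝ)
    (hpr : pr + cval ρ τ X ε i βi * deriv ρ pr = resid X ε βi i) :
    -- bound on ‖ηᵢ‖
    (‖etaVec ρ τ X ε i βi pr‖ ≤
      (1 / (Real.sqrt n * τ)) * (‖X i‖ / Real.sqrt n) *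
        min |deriv ρ (resid X ε βi i)| (|resid X ε βi i| / cval ρ τ X ε i βi)) ∧
    -- bound on ‖𝓡ᵢ‖ for any choice of the γ*ⱼ's
    (∀ γ : Fin n → ℝ,
      ‖(1 / (n : ℝ)) • ∑ j ∈ Finset.univ.erase i,
          ((deriv (deriv ρ) (γ j) - deriv (deriv ρ) (resid X ε βi j)) *
            (∑ k, X j k * etaVec ρ τ X ε i βi pr k)) • X j‖ ≤
        ‖Matrix.toEuclideanCLM (𝕜 := ℝ) (sigmaHat X)‖ *
          (⨆ j : {j : Fin n // j ≠ i},
            |deriv (deriv ρ) (γ j) - deriv (deriv ρ) (resid X ε βi j)|) *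
          ((1 / (Real.sqrt n * τ)) * (‖X i‖ / Real.sqrt n) *
            min |deriv ρ (resid X ε βi i)| (|resid X ε βi i| / cval ρ τ X ε i βi))) := by
  classical
  have hn0 : 0 < n := i.pos
  have hn0' : (0:ℝ) < (n:ℝ) := by exact_mod_cast hn0
  -- calculus facts
  have hρdiff : Differentiable ℝ ρ := hρsmooth.differentiable (by norm_num)
  have hψdiff : Differentiable ℝ (deriv ρ) := by
    have h2' : ContDiff ℝ ((1 : WithTop ℕ∞) + 1) ρ := by
      refine hρsmooth.of_le ?_; norm_num
    exact ((contDiff_succ_iff_deriv.mp h2').2.2).differentiable one_ne_zero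
  have hmono : Monotone (deriv ρ) :=
    monotoneOn_univ.mp (hρconv.monotoneOn_deriv fun x _ => hρdiff x)
  have hψ'' : ∀ x, 0 ≤ deriv (deriv ρ) x := fun x =>
    deriv_nonneg_of_monotone hmono (hψdiff x)
  have hψ0 : deriv ρ 0 = 0 := by
    have hmin : IsLocalMin ρ 0 := Filter.Eventually.of_forall fun x => by
      rw [hρzero]; exact hρnonneg x
    exact hmin.deriv_eq_zero
  set r := resid X ε βi i with hr_def
  set c := cval ρ τ X ε i βi with hc_def
  set m := min |deriv ρ r| (|r| / c) with hm_def
  have hm0 : 0 ≤ m := le_min (abs_nonneg _) (div_nonneg (abs_nonneg _) hc.le)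
  -- prox bound : |ψ(pr)| ≤ m
  have habs : |deriv ρ pr| ≤ m := by
    have key : c * |deriv ρ pr| ≤ |r| ∧ |deriv ρ pr| ≤ |deriv ρ r| := by
      rcases lt_trichotomy pr 0 with hneg | h0 | hpos
      · have h1 : deriv ρ pr ≤ 0 := hψ0 ▸ hmono hneg.le
        have hcp : c * deriv ρ pr ≤ 0 := mul_nonpos_of_nonneg_of_nonpos hc.le h1
        have hrpr : r ≤ pr := by linarith [hpr]
        have hr0 : r ≤ 0 := hrpr.trans hneg.le
        have h2 : deriv ρ r ≤ deriv ρ pr := hmono hrpr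
        constructor
        · rw [abs_of_nonpos h1, abs_of_nonpos hr0]; nlinarith [hpr]
        · rw [abs_of_nonpos h1, abs_of_nonpos (h2.trans h1)]; linarith
      · subst h0
        rw [hψ0]
        simp [abs_nonneg]
      · have h1 : 0 ≤ deriv ρ pr := hψ0 ▸ hmono hpos.le
        have hcp : 0 ≤ c * deriv ρ pr := mul_nonneg hc.le h1
        have hrpr : pr ≤ r := by linarith [hpr]
        have hr0 : 0 ≤ r := hpos.le.trans hrpr
        have h2 : deriv ρ pr ≤ deriv ρ r := hmono hrpr
        constructor
        · rw [abs_of_nonneg h1, abs_of_nonneg hr0]; nlinarith [hpr]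
        · rw [abs_of_nonneg h1, abs_of_nonneg (h1.trans h2)]; linarith
    exact le_min key.2 ((le_div_iff₀ hc).mpr (by linarith [key.1]))
  -- matrix facts
  set M := Smat ρ X ε i βi + τ • (1 : Matrix (Fin p) (Fin p) ℝ) with hM_def
  have hSq : ∀ v : Fin p → ℝ, dotProduct v ((Smat ρ X ε i βi).mulVec v)
      = (1/(n:ℝ)) * ∑ j ∈ Finset.univ.erase i,
          deriv (deriv ρ) (resid X ε βi j) *
            (dotProduct (fun k => X j k) v)^2 := by
    intro v
    exact qform_eq _ _ _ _ _
  have hSnn : ∀ v : Fin p → ℝ, 0 ≤ dotProduct v ((Smat ρ X ε i βi).mulVec v) := by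
    intro v
    rw [hSq]
    exact mul_nonneg (by positivity)
      (Finset.sum_nonneg fun j _ => mul_nonneg (hψ'' _) (sq_nonneg _))
  have hMherm : M.IsHermitian := by
    have hSh : (Smat ρ X ε i βi).IsHermitian := by
      unfold Matrix.IsHermitian
      ext k l
      simp [Smat, Matrix.conjTranspose_apply, Matrix.smul_apply, Matrix.sum_apply,
        Matrix.vecMulVec_apply, mul_comm]
    have hTh : ((τ • (1 : Matrix (Fin p) (Fin p) ℝ))).IsHermitian := by
      unfold Matrix.IsHermitian
      ext k l
      rcases eq_or_ne k l with h | h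
      · simp [h]
      · simp [Matrix.conjTranspose_apply, Matrix.one_apply, h, Ne.symm h]
    exact hSh.add hTh
  have hMquad : ∀ v : Fin p → ℝ, dotProduct v (M.mulVec v)
      = dotProduct v ((Smat ρ X ε i βi).mulVec v) + τ * dotProduct v v := by
    intro v
    rw [hM_def, Matrix.add_mulVec, dotProduct_add, Matrix.smul_mulVec,
      Matrix.one_mulVec, dotProduct_smul, smul_eq_mul]
  have hMpos : M.PosDef := by
    refine Matrix.PosDef.of_dotProduct_mulVec_pos hMherm fun x hx => ?_
    have hxx : 0 < dotProduct x x := by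
      rcases (Finset.sum_nonneg fun k (_ : k ∈ Finset.univ) => mul_self_nonneg (x k)).eq_or_lt
        with h | h
      · exact absurd (dotProduct_self_eq_zero.mp h.symm) hx
      · exact h
    have := hSnn x
    simp only [star_trivial]
    rw [hMquad]
    nlinarith
  have hdet : IsUnit M.det := isUnit_iff_ne_zero.mpr hMpos.det_pos.ne'
  set u : Fin p → ℝ := M⁻¹.mulVec (fun l => X i l) with hu_def
  have hMu : M.mulVec u = (fun l => X i l) := by
    rw [hu_def, Matrix.mulVec_mulVec, Matrix.mul_nonsing_inv _ hdet, Matrix.one_mulVec]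
  -- norm bound on u
  have hub : τ * ‖toE u‖ ≤ ‖X i‖ := by
    have h1 : τ * (dotProduct u u) ≤ dotProduct u (M.mulVec u) := by
      rw [hMquad]; linarith [hSnn u]
    have h2 : dotProduct u (M.mulVec u) = dotProduct u (fun l => X i l) := by
      rw [hMu]
    have h3 : dotProduct u (fun l => X i l) ≤ ‖toE u‖ * ‖X i‖ := by
      rw [dot_inner]
      exact real_inner_le_norm (toE u) (X i)
    have h4 : dotProduct u u = ‖toE u‖^2 := by
      rw [dot_inner]
      exact real_inner_self_eq_norm_sq (toE u)
    rw [h4] at h1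
    have h5 : τ * ‖toE u‖^2 ≤ ‖toE u‖ * ‖X i‖ := by linarith
    rcases (norm_nonneg (toE u)).eq_or_lt with h | h
    · rw [← h]; simp [norm_nonneg]
    · nlinarith
  -- part A
  have hη_eq : etaVec ρ τ X ε i βi pr = ((1/(n:ℝ)) * deriv ρ pr) • toE u := rfl
  have hnorm_eta : ‖etaVec ρ τ X ε i βi pr‖ = (1/(n:ℝ)) * |deriv ρ pr| * ‖toE u‖ := by
    rw [hη_eq, norm_smul, Real.norm_eq_abs, abs_mul,
      abs_of_nonneg (by positivity : (0:ℝ) ≤ 1/(n:ℝ))]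
  have hsq : Real.sqrt n * Real.sqrt n = (n:ℝ) := Real.mul_self_sqrt (Nat.cast_nonneg n)
  have hs_pos : 0 < Real.sqrt n := Real.sqrt_pos.mpr hn0'
  have hA : ‖etaVec ρ τ X ε i βi pr‖ ≤
      1 / (Real.sqrt n * τ) * (‖X i‖ / Real.sqrt n) * m := by
    have h1 : ‖toE u‖ ≤ ‖X i‖ / τ := (le_div_iff₀ hτ).mpr (by linarith [hub])
    have h2 : |deriv ρ pr| * ‖toE u‖ ≤ m * (‖X i‖ / τ) :=
      mul_le_mul habs h1 (norm_nonneg _) hm0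
    calc ‖etaVec ρ τ X ε i βi pr‖ = (1/(n:ℝ)) * (|deriv ρ pr| * ‖toE u‖) := by
          rw [hnorm_eta]; ring
      _ ≤ (1/(n:ℝ)) * (m * (‖X i‖ / τ)) := by
          apply mul_le_mul_of_nonneg_left h2; positivity
      _ = 1 / (Real.sqrt n * τ) * (‖X i‖ / Real.sqrt n) * m := by
          field_simp
          linear_combination (m * ‖X i‖) * hsq
  have hB0 : 0 ≤ 1 / (Real.sqrt n * τ) * (‖X i‖ / Real.sqrt n) * m := by
    have : (0:ℝ) ≤ 1 / (Real.sqrt n * τ) * (‖X i‖ / Real.sqrt n) := by positivity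
    exact mul_nonneg this hm0
  exact ⟨hA, fun γ => partB X i (etaVec ρ τ X ε i βi pr)
    (fun j => deriv (deriv ρ) (γ j) - deriv (deriv ρ) (resid X ε βi j)) _ hA hB0⟩
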